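/- Let n and e be positive integers with 1 ≤ e ≤ n, and let c be any integer. Then the number of e-element subsets J of [1,n] such that c(J) = c and n ∉ J is C(e−1, c−1)·C(n−e, c). -/

import Mathlib

/-- Binomial coefficient `C(a,b)` for integers, with the convention that it is `0`
when `a < 0` or `b < 0` (and, as usual, when `b > a`), and `C(a,0) = 1` for `a ≥ 0`. -/
def intChoose (a b : ℤ) : ℕ :=
  if 0 ≤ a ∧ 0 ≤ b then a.toNat.choose b.toNat else 0

/-- The number of connected components of a finite set of integers:
`c(J) = |{j ∈ J : j+1 ∉ J}|`. -/
def numComponents (J : Finset ℕ) : ℕ := (J.filter (fun j => j + 1 ∉ J)).card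


def cntA (n e k : ℕ) : ℕ :=
  ((Finset.Icc 1 n).powerset.filter
    (fun J => J.card = e ∧ numComponents J = k ∧ n ∉ J)).card

def cntB (n e k : ℕ) : ℕ :=
  ((Finset.Icc 1 n).powerset.filter
    (fun J => J.card = e ∧ numComponents J = k ∧ n ∈ J)).card

lemma cntA_of_lt (n e k : ℕ) (h : n < e) : cntA n e k = 0 := by
  rw [cntA, Finset.card_eq_zero, Finset.filter_eq_empty_iff]
  rintro J hJ ⟨hc, _⟩
  rw [Finset.mem_powerset] at hJ
  have := Finset.card_le_card hJ
  simp [Nat.card_Icc] at this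
  omega

lemma cntB_of_lt (n e k : ℕ) (h : n < e) : cntB n e k = 0 := by
  rw [cntB, Finset.card_eq_zero, Finset.filter_eq_empty_iff]
  rintro J hJ ⟨hc, _⟩
  rw [Finset.mem_powerset] at hJ
  have := Finset.card_le_card hJ
  simp [Nat.card_Icc] at this
  omega

lemma cntA_e0 (n k : ℕ) : cntA n 0 k = if k = 0 then 1 else 0 := by
  rw [cntA]
  split_ifs with hk
  · subst hk
    rw [Finset.card_eq_one]
    refine ⟨∅, ?_⟩
    ext J
    simp only [Finset.mem_filter, Finset.mem_powerset, Finset.mem_singleton,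
      Finset.card_eq_zero]
    constructor
    · rintro ⟨_, h, _⟩; exact h
    · rintro rfl
      simp [numComponents]
  · rw [Finset.card_eq_zero, Finset.filter_eq_empty_iff]
    rintro J hJ ⟨hc, hcomp, _⟩
    rw [Finset.card_eq_zero] at hc
    subst hc
    simp [numComponents] at hcomp
    exact hk hcomp.symm

lemma cntB_e0 (n k : ℕ) : cntB n 0 k = 0 := by
  rw [cntB, Finset.card_eq_zero, Finset.filter_eq_empty_iff]
  rintro J hJ ⟨hc, _, hn⟩
  rw [Finset.card_eq_zero] at hc
  subst hc
  simp at hn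

lemma cntB_k0 (n e : ℕ) : cntB n e 0 = 0 := by
  rw [cntB, Finset.card_eq_zero, Finset.filter_eq_empty_iff]
  rintro J hJ ⟨hc, hcomp, hn⟩
  rw [Finset.mem_powerset] at hJ
  have hnF : n ∈ J.filter (fun j => j + 1 ∉ J) := by
    simp only [Finset.mem_filter]
    refine ⟨hn, fun hc2 => ?_⟩
    have := hJ hc2
    simp [Finset.mem_Icc] at this
  have : 0 < numComponents J := Finset.card_pos.mpr ⟨n, hnF⟩
  omega

lemma lemma1 (n e k : ℕ) (hn : 1 ≤ n) :
    cntA n e k = cntA (n - 1) e k + cntB (n - 1) e k := by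
  have hset : (Finset.Icc 1 n).powerset.filter
      (fun J => J.card = e ∧ numComponents J = k ∧ n ∉ J)
      = (Finset.Icc 1 (n-1)).powerset.filter
          (fun J => J.card = e ∧ numComponents J = k ∧ n - 1 ∉ J)
        ∪ (Finset.Icc 1 (n-1)).powerset.filter
          (fun J => J.card = e ∧ numComponents J = k ∧ n - 1 ∈ J) := by
    ext J
    simp only [Finset.mem_filter, Finset.mem_powerset, Finset.mem_union]
    have hsub : (J ⊆ Finset.Icc 1 n ∧ n ∉ J) ↔ J ⊆ Finset.Icc 1 (n-1) := by
      constructor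
      · rintro ⟨h1, h2⟩ j hj
        have := h1 hj
        simp only [Finset.mem_Icc] at this ⊢
        have : j ≠ n := fun he => h2 (he ▸ hj)
        try simp only [Finset.mem_Icc] at *
        omega
      · intro h
        constructor
        · intro j hj
          have := h hj
          simp only [Finset.mem_Icc] at this ⊢
          omega
        · intro hc
          have := h hc
          simp only [Finset.mem_Icc] at this
          omega
    by_cases hmem : n - 1 ∈ J <;> tauto
  rw [cntA, hset, Finset.card_union_of_disjoint, cntA, cntB]
  rw [Finset.disjoint_left]
  rintro J h1 h2
  simp only [Finset.mem_filter] at h1 h2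
  exact h1.2.2.2 h2.2.2.2

lemma filt_erase (J : Finset ℕ) (n : ℕ) (hn1 : 1 ≤ n) :
    (J.erase n).filter (fun j => j + 1 ∉ J.erase n)
      = if n - 1 ∈ J then insert (n-1) ((J.filter (fun j => j+1 ∉ J)).erase n)
        else (J.filter (fun j => j+1 ∉ J)).erase n := by
  split_ifs with h
  · ext j
    simp only [Finset.mem_filter, Finset.mem_erase, Finset.mem_insert]
    constructor
    · rintro ⟨⟨hjn, hj⟩, h2⟩
      by_cases hje : j = n - 1
      · exact Or.inl hje
      · exact Or.inr ⟨hjn, hj, fun hc => h2 ⟨fun he => hje (by omega), hc⟩⟩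
    · rintro (rfl | ⟨hjn, hj, h2⟩)
      · refine ⟨⟨by omega, h⟩, ?_⟩
        rintro ⟨h3, h4⟩
        exact h3 (by omega)
      · exact ⟨⟨hjn, hj⟩, fun hc => h2 hc.2⟩
  · ext j
    simp only [Finset.mem_filter, Finset.mem_erase]
    constructor
    · rintro ⟨⟨hjn, hj⟩, h2⟩
      refine ⟨hjn, hj, fun hc => h2 ⟨fun he => ?_, hc⟩⟩
      have : j = n - 1 := by omega
      exact h (this ▸ hj)
    · rintro ⟨hjn, hj, h2⟩
      exact ⟨⟨hjn, hj⟩, fun hc => h2 hc.2⟩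

lemma comps_erase (J : Finset ℕ) (n : ℕ) (hn1 : 1 ≤ n) (hJ : ∀ j ∈ J, j ≤ n) (hn : n ∈ J) :
    numComponents (J.erase n) + (if n - 1 ∈ J then 0 else 1) = numComponents J := by
  have key := filt_erase J n hn1
  have hnF : n ∈ J.filter (fun j => j + 1 ∉ J) := by
    simp only [Finset.mem_filter]
    exact ⟨hn, fun hc => by have := hJ _ hc; omega⟩
  have hpos : 0 < (J.filter (fun j => j + 1 ∉ J)).card := Finset.card_pos.mpr ⟨n, hnF⟩
  unfold numComponents
  rw [key]
  split_ifs with h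
  · have hn1F : n - 1 ∉ (J.filter (fun j => j+1 ∉ J)).erase n := by
      simp only [Finset.mem_erase, Finset.mem_filter]
      rintro ⟨h1, h2, h3⟩
      exact h3 (by rwa [Nat.sub_add_cancel hn1])
    rw [Finset.card_insert_of_notMem hn1F, Finset.card_erase_of_mem hnF]
    omega
  · rw [Finset.card_erase_of_mem hnF]
    omega

lemma lemma2 (n e k : ℕ) (hn : 1 ≤ n) (he : 1 ≤ e) (hk : 1 ≤ k) :
    cntB n e k = cntB (n-1) (e-1) k + cntA (n-1) (e-1) (k-1) := by
  have hsplit := Finset.card_filter_add_card_filter_not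
    (s := (Finset.Icc 1 n).powerset.filter
      (fun J => J.card = e ∧ numComponents J = k ∧ n ∈ J)) (p := fun J => n - 1 ∈ J)
  rw [Finset.filter_filter, Finset.filter_filter] at hsplit
  have hb1 : ((Finset.Icc 1 n).powerset.filter (fun J => (J.card = e ∧ numComponents J = k ∧ n ∈ J) ∧ n - 1 ∈ J)).card
      = cntB (n-1) (e-1) k := by
    rw [cntB]
    refine Finset.card_bij' (fun J _ => J.erase n) (fun J' _ => insert n J') ?_ ?_ ?_ ?_
    · rintro J hJ
      simp only [Finset.mem_filter, Finset.mem_powerset] at hJ ⊢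
      obtain ⟨hsub, ⟨hcard, hcomp, hnJ⟩, hn1J⟩ := hJ
      have hle : ∀ j ∈ J, j ≤ n := fun j hj => by
        have := hsub hj; simp only [Finset.mem_Icc] at this; omega
      refine ⟨?_, ?_, ?_, ?_⟩
      · intro j hj
        rw [Finset.mem_erase] at hj
        have := hsub hj.2
        simp only [Finset.mem_Icc] at this ⊢
        have := hj.1
        omega
      · rw [Finset.card_erase_of_mem hnJ, hcard]
      · have := comps_erase J n hn hle hnJ
        rw [if_pos hn1J] at this
        omega
      · rw [Finset.mem_erase]
        exact ⟨by omega, hn1J⟩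
    · rintro J' hJ'
      simp only [Finset.mem_filter, Finset.mem_powerset] at hJ' ⊢
      obtain ⟨hsub, hcard, hcomp, hn1J⟩ := hJ'
      have hnotin : n ∉ J' := fun hc => by
        have := hsub hc; simp only [Finset.mem_Icc] at this; omega
      have hsub2 : insert n J' ⊆ Finset.Icc 1 n := by
        refine Finset.insert_subset (by simp [Finset.mem_Icc]; omega) ?_
        intro j hj
        have := hsub hj; simp only [Finset.mem_Icc] at this ⊢; omega
      have hcomp2 : numComponents (insert n J') = k := by
        have hle : ∀ j ∈ insert n J', j ≤ n := fun j hj => by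
          have := hsub2 hj; simp only [Finset.mem_Icc] at this; omega
        have := comps_erase (insert n J') n hn hle (Finset.mem_insert_self n J')
        rw [Finset.erase_insert hnotin, if_pos (Finset.mem_insert_of_mem hn1J)] at this
        omega
      refine ⟨hsub2, ⟨?_, hcomp2, Finset.mem_insert_self n J'⟩, Finset.mem_insert_of_mem hn1J⟩
      rw [Finset.card_insert_of_notMem hnotin, hcard]
      omega
    · rintro J hJ
      simp only [Finset.mem_filter] at hJ
      exact Finset.insert_erase hJ.2.1.2.2
    · rintro J' hJ'
      simp only [Finset.mem_filter, Finset.mem_powerset] at hJ'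
      have hnotin : n ∉ J' := fun hc => by
        have := hJ'.1 hc; simp only [Finset.mem_Icc] at this; omega
      exact Finset.erase_insert hnotin
  have hb2 : ((Finset.Icc 1 n).powerset.filter (fun J => (J.card = e ∧ numComponents J = k ∧ n ∈ J) ∧ ¬ n - 1 ∈ J)).card
      = cntA (n-1) (e-1) (k-1) := by
    rw [cntA]
    refine Finset.card_bij' (fun J _ => J.erase n) (fun J' _ => insert n J') ?_ ?_ ?_ ?_
    · rintro J hJ
      simp only [Finset.mem_filter, Finset.mem_powerset] at hJ ⊢
      obtain ⟨hsub, ⟨hcard, hcomp, hnJ⟩, hn1J⟩ := hJ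
      have hle : ∀ j ∈ J, j ≤ n := fun j hj => by
        have := hsub hj; simp only [Finset.mem_Icc] at this; omega
      refine ⟨?_, ?_, ?_, ?_⟩
      · intro j hj
        rw [Finset.mem_erase] at hj
        have := hsub hj.2
        simp only [Finset.mem_Icc] at this ⊢
        have := hj.1
        omega
      · rw [Finset.card_erase_of_mem hnJ, hcard]
      · have := comps_erase J n hn hle hnJ
        rw [if_neg hn1J] at this
        omega
      · rw [Finset.mem_erase]
        rintro ⟨h1, h2⟩
        exact hn1J h2
    · rintro J' hJ'
      simp only [Finset.mem_filter, Finset.mem_powerset] at hJ' ⊢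
      obtain ⟨hsub, hcard, hcomp, hn1J⟩ := hJ'
      have hnotin : n ∉ J' := fun hc => by
        have := hsub hc; simp only [Finset.mem_Icc] at this; omega
      have hn1notin : n - 1 ∉ insert n J' := by
        rw [Finset.mem_insert]
        rintro (h | h)
        · omega
        · exact hn1J h
      have hsub2 : insert n J' ⊆ Finset.Icc 1 n := by
        refine Finset.insert_subset (by simp [Finset.mem_Icc]; omega) ?_
        intro j hj
        have := hsub hj; simp only [Finset.mem_Icc] at this ⊢; omega
      have hcomp2 : numComponents (insert n J') = k := by
        have hle : ∀ j ∈ insert n J', j ≤ n := fun j hj => by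
          have := hsub2 hj; simp only [Finset.mem_Icc] at this; omega
        have := comps_erase (insert n J') n hn hle (Finset.mem_insert_self n J')
        rw [Finset.erase_insert hnotin, if_neg hn1notin] at this
        omega
      refine ⟨hsub2, ⟨?_, hcomp2, Finset.mem_insert_self n J'⟩, hn1notin⟩
      rw [Finset.card_insert_of_notMem hnotin, hcard]
      omega
    · rintro J hJ
      simp only [Finset.mem_filter] at hJ
      exact Finset.insert_erase hJ.2.1.2.2
    · rintro J' hJ'
      simp only [Finset.mem_filter, Finset.mem_powerset] at hJ'
      have hnotin : n ∉ J' := fun hc => by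
        have := hJ'.1 hc; simp only [Finset.mem_Icc] at this; omega
      exact Finset.erase_insert hnotin
  rw [cntB]
  rw [hb1, hb2] at hsplit
  exact hsplit.symm

def fA (n e k : ℕ) : ℕ :=
  if e = 0 then (if k = 0 then 1 else 0)
  else if k = 0 then 0
  else Nat.choose (e-1) (k-1) * Nat.choose (n-e) k

def fB (n e k : ℕ) : ℕ :=
  if e = 0 ∨ k = 0 then 0
  else Nat.choose (e-1) (k-1) * Nat.choose (n-e) (k-1)

lemma fA_pos (n e k : ℕ) (he : 1 ≤ e) (hk : 1 ≤ k) :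
    fA n e k = Nat.choose (e-1) (k-1) * Nat.choose (n-e) k := by
  unfold fA; rw [if_neg (by omega), if_neg (by omega)]

lemma fB_pos (n e k : ℕ) (he : 1 ≤ e) (hk : 1 ≤ k) :
    fB n e k = Nat.choose (e-1) (k-1) * Nat.choose (n-e) (k-1) := by
  unfold fB; rw [if_neg (by omega)]

lemma fA_e0 (n k : ℕ) : fA n 0 k = if k = 0 then 1 else 0 := by unfold fA; simp

lemma fA_k0 (n e : ℕ) (he : 1 ≤ e) : fA n e 0 = 0 := by
  unfold fA; rw [if_neg (by omega), if_pos rfl]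

lemma fB_e0 (n k : ℕ) : fB n 0 k = 0 := by unfold fB; simp

lemma fB_k0 (n e : ℕ) : fB n e 0 = 0 := by unfold fB; simp

lemma idA (n e k : ℕ) (he : e ≤ n) : fA n e k + fB n e k = fA (n+1) e k := by
  rcases Nat.eq_zero_or_pos e with rfl | he1
  · simp [fA, fB]
  rcases Nat.eq_zero_or_pos k with rfl | hk1
  · rw [fA_k0 _ _ he1, fB_k0, fA_k0 _ _ he1]
  rw [fA_pos _ _ _ he1 hk1, fB_pos _ _ _ he1 hk1, fA_pos _ _ _ he1 hk1]
  obtain ⟨k', rfl⟩ : ∃ k', k = k' + 1 := ⟨k - 1, by omega⟩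
  have h1 : n + 1 - e = (n - e) + 1 := by omega
  have h2 : k' + 1 - 1 = k' := by omega
  rw [h1, h2, Nat.choose_succ_succ (n - e) k']
  ring

lemma idB (n e k : ℕ) (he : 1 ≤ e) (hk : 1 ≤ k) :
    fB n (e-1) k + fA n (e-1) (k-1) = fB (n+1) e k := by
  obtain ⟨e', rfl⟩ : ∃ e', e = e' + 1 := ⟨e - 1, by omega⟩
  obtain ⟨k', rfl⟩ : ∃ k', k = k' + 1 := ⟨k - 1, by omega⟩
  simp only [Nat.add_sub_cancel]
  rw [fB_pos (n+1) (e'+1) (k'+1) (by omega) (by omega)]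
  simp only [Nat.add_sub_cancel]
  rcases Nat.eq_zero_or_pos e' with rfl | he1
  · rw [fB_e0, fA_e0]
    rcases Nat.eq_zero_or_pos k' with rfl | hk1
    · simp
    · rw [if_neg (by omega), Nat.choose_eq_zero_of_lt hk1]
      simp
  · rw [fB_pos _ _ _ he1 (by omega)]
    simp only [Nat.add_sub_cancel]
    rcases Nat.eq_zero_or_pos k' with rfl | hk1
    · rw [fA_k0 _ _ he1]
      simp
    · rw [fA_pos _ _ _ he1 hk1]
      obtain ⟨k'', rfl⟩ : ∃ k'', k' = k'' + 1 := ⟨k' - 1, by omega⟩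
      obtain ⟨e'', rfl⟩ : ∃ e'', e' = e'' + 1 := ⟨e' - 1, by omega⟩
      simp only [Nat.add_sub_cancel]
      have h5 : n + 1 - (e'' + 1 + 1) = n - (e'' + 1) := by omega
      rw [h5, Nat.choose_succ_succ e'' k'']
      ring

lemma master (n : ℕ) : ∀ e k : ℕ, e ≤ n → cntA n e k = fA n e k ∧ cntB n e k = fB n e k := by
  induction n with
  | zero =>
    intro e k he
    obtain rfl : e = 0 := by omega
    exact ⟨by rw [cntA_e0, fA_e0], by rw [cntB_e0, fB_e0]⟩
  | succ n ih =>
    intro e k he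
    constructor
    · rw [lemma1 (n+1) e k (by omega)]
      simp only [Nat.add_sub_cancel]
      by_cases he' : e ≤ n
      · rw [(ih e k he').1, (ih e k he').2, idA n e k he']
      · have heq : e = n + 1 := by omega
        subst heq
        rw [cntA_of_lt _ _ _ (by omega), cntB_of_lt _ _ _ (by omega)]
        rcases Nat.eq_zero_or_pos k with rfl | hk
        · rw [fA_k0 _ _ (by omega)]
        · rw [fA_pos _ _ _ (by omega) hk, Nat.sub_self, Nat.choose_eq_zero_of_lt hk]
          simp
    · rcases Nat.eq_zero_or_pos e with rfl | he1
      · rw [cntB_e0, fB_e0]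
      rcases Nat.eq_zero_or_pos k with rfl | hk1
      · rw [cntB_k0, fB_k0]
      rw [lemma2 (n+1) e k (by omega) he1 hk1]
      simp only [Nat.add_sub_cancel]
      have h1 : e - 1 ≤ n := by omega
      rw [(ih (e-1) k h1).2, (ih (e-1) (k-1) h1).1, idB n e k he1 hk1]

/-- The number of `e`-element subsets `J` of `[1,n]` with `c(J) = c` not containing `n` is
`C(e−1, c−1) · C(n−e, c)`. -/
theorem num_subsets_with_components_avoiding_top (n e : ℕ) (he : 1 ≤ e) (hn : e ≤ n)
    (c : ℤ) :
    ((Finset.Icc 1 n).powerset.filter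
        (fun J => J.card = e ∧ (numComponents J : ℤ) = c ∧ n ∉ J)).card
      = intChoose ((e : ℤ) - 1) (c - 1) * intChoose ((n : ℤ) - e) c := by
  by_cases hc : 0 ≤ c
  · lift c to ℕ using hc with k
    have hL : ((Finset.Icc 1 n).powerset.filter
        (fun J => J.card = e ∧ (numComponents J : ℤ) = (k : ℤ) ∧ n ∉ J)).card = cntA n e k := by
      unfold cntA
      congr 1
      apply Finset.filter_congr
      intro J _
      simp [Nat.cast_inj]
    rw [hL, (master n e k hn).1]
    rcases Nat.eq_zero_or_pos k with rfl | hk1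
    · rw [fA_k0 _ _ he]
      unfold intChoose
      rw [if_neg (by omega)]
      simp
    · rw [fA_pos _ _ _ he hk1]
      unfold intChoose
      rw [if_pos ⟨by omega, by omega⟩, if_pos ⟨by omega, by omega⟩]
      have h1 : ((e : ℤ) - 1).toNat = e - 1 := by omega
      have h2 : ((k : ℤ) - 1).toNat = k - 1 := by omega
      have h3 : ((n : ℤ) - (e : ℤ)).toNat = n - e := by omega
      have h4 : ((k : ℤ)).toNat = k := by omega
      rw [h1, h2, h3, h4]
  · have hL : ((Finset.Icc 1 n).powerset.filter
        (fun J => J.card = e ∧ (numComponents J : ℤ) = c ∧ n ∉ J)).card = 0 := by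
      rw [Finset.card_eq_zero, Finset.filter_eq_empty_iff]
      rintro J _ ⟨_, hcomp, _⟩
      omega
    rw [hL]
    unfold intChoose
    rw [if_neg (by omega)]
    simp
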